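/- The q-deformed binomial coefficients satisfy the skew Pascal-type recursion used in the inductive proof: φ(l|n) = p ∑_{m=0}^{l} φ(m|n-1) a_{n-l}^{n-m} + (1-p) φ(l|n-1) for l < n, and φ(n|n) = p ∑_{m=0}^{n-1} φ(m|n-1) a_0^{n-m}, where φ(m|n) = μ^m (ν/μ;q)_m (μ;q)_{n-m}(q;q)_n / ((ν;q)_n (q;q)_m (q;q)_{n-m}), a_k^l = (1-ν)(q-ν)ν^{l-k-1}q^{k-1}(q;q)_{l-1}(ν;q)_{k-1}/((q;q)_k(ν;q)_l) for k < l, a_l^l = (1-q^{l-1})/(1-νq^{l-1}), μ = p + ν(1-p). -/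

import Mathlib

/-- The q-Pochhammer symbol `(a;q)_n = ∏_{k=0}^{n-1} (1 - a q^k)` for `n : ℕ`. -/
noncomputable def qPoch (a q : ℂ) (n : ℕ) : ℂ := ∏ k ∈ Finset.range n, (1 - a * q ^ k)

/-- The q-Pochhammer symbol extended to integer index (`(a;q)_{-1} = (1-a/q)⁻¹`, etc.). -/
noncomputable def qPochZ (a q : ℂ) (n : ℤ) : ℂ :=
  if 0 ≤ n then qPoch a q n.toNat
  else ∏ k ∈ Finset.Icc 1 (-n).toNat, (1 - a * q ^ (-(k : ℤ)))⁻¹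

/-- The hopping weight
`φ(m|n) = μ^m (ν/μ;q)_m (μ;q)_{n-m} (q;q)_n / ((ν;q)_n (q;q)_m (q;q)_{n-m})`. -/
noncomputable def hopProb (q μ ν : ℂ) (m n : ℕ) : ℂ :=
  μ ^ m * qPoch (ν / μ) q m * qPoch μ q (n - m) * qPoch q q n /
    (qPoch ν q n * qPoch q q m * qPoch q q (n - m))

/-- The closed-form normal-ordering coefficients `a_k^l`. -/
noncomputable def aCoef (q ν : ℂ) (k l : ℕ) : ℂ :=
  if k = l then (1 - q ^ (l - 1)) / (1 - ν * q ^ (l - 1))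
  else (1 - ν) * (q - ν) * ν ^ (l - k - 1) * q ^ ((k : ℤ) - 1) *
    qPoch q q (l - 1) * qPochZ ν q ((k : ℤ) - 1) / (qPoch q q k * qPoch ν q l)

lemma qPoch_succ (a q : ℂ) (n : ℕ) : qPoch a q (n+1) = qPoch a q n * (1 - a * q ^ n) :=
  Finset.prod_range_succ _ _

lemma qPoch_zero (a q : ℂ) : qPoch a q 0 = 1 := Finset.prod_range_zero _

lemma fac_ne {x q : ℂ} (hx : ∀ k : ℕ, qPoch x q k ≠ 0) (t : ℕ) : (1 : ℂ) - x * q ^ t ≠ 0 := by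
  have h := hx (t+1)
  rw [qPoch_succ] at h
  exact right_ne_zero_of_mul h

set_option maxHeartbeats 2000000 in
lemma cert (q ν μ : ℂ) (hμ0 : μ ≠ 0)
    (hqq : ∀ k : ℕ, qPoch q q k ≠ 0) (hν : ∀ k : ℕ, qPoch ν q k ≠ 0)
    (j k s : ℕ) (hks : k ≤ s) :
    hopProb q μ ν j (j+s+1) * aCoef q ν k (s+2) *
      (ν*μ*q^(s+2) - ν^2*q^(j+s+2) - μ*q + ν*q^(j+1))
    = hopProb q μ ν (j+1) (j+s+1) * aCoef q ν k (s+1) *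
      ((ν*μ*q^(s+1) - ν^2*q^(j+s+2) - μ*q + ν*q^(j+2)) - (μ-ν)*(ν*q^(j+s+2) - q)) := by
  simp only [hopProb, aCoef]
  rw [if_neg (by omega : ¬ k = s+2), if_neg (by omega : ¬ k = s+1)]
  simp only [show j+s+1-j = s+1 from by omega, show j+s+1-(j+1) = s from by omega,
    show s+2-k-1 = (s-k)+1 from by omega, show s+1-k-1 = s-k from by omega,
    show s+2-1 = s+1 from by omega, show s+1-1 = s from by omega]
  generalize qPochZ ν q ((k : ℤ) - 1) = Z
  generalize q ^ ((k : ℤ) - 1) = c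
  rw [show μ^(j+1) * qPoch (ν/μ) q (j+1) = μ^j * qPoch (ν/μ) q j * (μ - ν*q^j) from by
    rw [qPoch_succ, pow_succ]; field_simp]
  rw [qPoch_succ μ q s, qPoch_succ q q s, qPoch_succ q q j,
    qPoch_succ ν q (s+1), qPoch_succ ν q s]
  rw [div_mul_div_comm, div_mul_div_comm, div_mul_eq_mul_div, div_mul_eq_mul_div,
    div_eq_div_iff (by apply_rules [mul_ne_zero, fac_ne, hqq, hν])
      (by apply_rules [mul_ne_zero, fac_ne, hqq, hν])]
  ring

lemma L1 (q ν μ : ℂ) (hμ0 : μ ≠ 0)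
    (hqq : ∀ k : ℕ, qPoch q q k ≠ 0) (hν : ∀ k : ℕ, qPoch ν q k ≠ 0)
    (n : ℕ) : ∀ j k : ℕ, j + k + 1 ≤ n →
    (∑ m ∈ Finset.range (j+1), hopProb q μ ν m (n-1) * aCoef q ν k (n-m)) *
      ((μ-ν)*(ν*q^n - q))
    = hopProb q μ ν j (n-1) * aCoef q ν k (n-j) *
      (ν*μ*q^(n-j) - ν^2*q^n - μ*q + ν*q^(j+1)) := by
  intro j
  induction j with
  | zero =>
    intro k hjk
    simp only [Nat.zero_add, Finset.sum_range_one, Nat.sub_zero]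
    ring
  | succ i ih =>
    intro k hjk
    obtain ⟨s, hs, hks⟩ : ∃ s, n = i + s + 2 ∧ k ≤ s := ⟨n - i - 2, by omega, by omega⟩
    subst hs
    have key := ih k (by omega)
    have c := cert q ν μ hμ0 hqq hν i k s hks
    rw [Finset.sum_range_succ, add_mul, key]
    simp only [show i+s+2-1 = i+s+1 from by omega, show i+s+2-i = s+2 from by omega,
      show i+s+2-(i+1) = s+1 from by omega] at *
    linear_combination c

lemma ha01 (q ν : ℂ) (hq0 : q ≠ 0) (hνq : ν ≠ q) (h1ν : (1:ℂ) - ν ≠ 0) :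
    aCoef q ν 0 1 = 1 := by
  have hqν : q - ν ≠ 0 := sub_ne_zero.mpr (Ne.symm hνq)
  have hx : (1:ℂ) - ν * q⁻¹ ≠ 0 := by
    rw [show (1:ℂ) - ν * q⁻¹ = (q - ν)/q from by field_simp]
    exact div_ne_zero hqν hq0
  rw [aCoef, if_neg (by omega : ¬ (0:ℕ) = 1)]
  rw [show qPochZ ν q (((0:ℕ):ℤ) - 1) = (1 - ν * q⁻¹)⁻¹ from by
    rw [qPochZ, if_neg (by norm_num)]
    norm_num]
  have h1 : qPoch ν q 1 = 1 - ν := by simp [qPoch]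
  have h2 : qPoch q q 0 = 1 := qPoch_zero q q
  rw [h1, h2]
  rw [show (((0:ℕ):ℤ) - 1) = (-1 : ℤ) from by norm_num, zpow_neg_one]
  norm_num
  rw [div_eq_one_iff_eq h1ν]
  field_simp

set_option maxHeartbeats 1000000 in
lemma finalLemma (q ν μ : ℂ) (hμ0 : μ ≠ 0)
    (hqq : ∀ k : ℕ, qPoch q q k ≠ 0) (hν : ∀ k : ℕ, qPoch ν q k ≠ 0) (i t : ℕ)
    (p : ℂ) (hrel : μ = p + ν * (1 - p)) :
    hopProb q μ ν (i+1) (i+t+2) * ((μ-ν)*(ν*q^(i+t+2) - q))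
    = p * (hopProb q μ ν i (i+t+1) * aCoef q ν (t+1) (t+2) *
        (ν*μ*q^(t+2) - ν^2*q^(i+t+2) - μ*q + ν*q^(i+1)))
      + p * (hopProb q μ ν (i+1) (i+t+1) * aCoef q ν (t+1) (t+1) *
        ((μ-ν)*(ν*q^(i+t+2) - q)))
      + (1-p) * (hopProb q μ ν (i+1) (i+t+1) * ((μ-ν)*(ν*q^(i+t+2) - q))) := by
  have hψ : μ^(i+1) * qPoch (ν/μ) q (i+1) = μ^i * qPoch (ν/μ) q i * (μ - ν*q^i) := by
    rw [qPoch_succ, pow_succ]; field_simp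
  have hDEN : qPoch ν q (i+t+1) * (1-ν*q^(i+t+1)) * qPoch q q i * (1-q*q^i) *
      qPoch q q t * (1-q*q^t) * (1-ν*q^t) * (1-ν*q^(t+1)) ≠ 0 := by
    apply_rules [mul_ne_zero, fac_ne, hqq, hν]
  have e1 : hopProb q μ ν (i+1) (i+t+2)
      = μ^i * qPoch (ν/μ) q i * (μ - ν*q^i) * qPoch μ q t * (1-μ*q^t) *
          qPoch q q (i+t+1) * (1-q*q^(i+t+1)) * (1-ν*q^t) * (1-ν*q^(t+1)) /
        (qPoch ν q (i+t+1) * (1-ν*q^(i+t+1)) * qPoch q q i * (1-q*q^i) *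
          qPoch q q t * (1-q*q^t) * (1-ν*q^t) * (1-ν*q^(t+1))) := by
    simp only [hopProb]
    simp only [show i+t+2-(i+1) = t+1 from by omega]
    rw [hψ, qPoch_succ μ q t, qPoch_succ q q (i+t+1), qPoch_succ ν q (i+t+1),
      qPoch_succ q q i, qPoch_succ q q t]
    rw [div_eq_div_iff (by apply_rules [mul_ne_zero, fac_ne, hqq, hν]) hDEN]
    ring
  have e2 : hopProb q μ ν i (i+t+1) * aCoef q ν (t+1) (t+2)
      = μ^i * qPoch (ν/μ) q i * qPoch μ q t * (1-μ*q^t) * qPoch q q (i+t+1) *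
          ((1-ν)*(q-ν)*q^t) * (1-ν*q^(i+t+1)) * (1-q*q^i) /
        (qPoch ν q (i+t+1) * (1-ν*q^(i+t+1)) * qPoch q q i * (1-q*q^i) *
          qPoch q q t * (1-q*q^t) * (1-ν*q^t) * (1-ν*q^(t+1))) := by
    rw [show aCoef q ν (t+1) (t+2) = (1-ν)*(q-ν)*q^t*qPoch q q (t+1)*qPoch ν q t /
        (qPoch q q (t+1) * qPoch ν q (t+2)) from by
      rw [aCoef, if_neg (by omega : ¬ t+1 = t+2)]
      rw [show (((t+1:ℕ)):ℤ) - 1 = (t:ℤ) from by push_cast; ring]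
      rw [show qPochZ ν q (t:ℤ) = qPoch ν q t from by simp [qPochZ]]
      rw [zpow_natCast]
      rw [show t+2-(t+1)-1 = 0 from by omega, show t+2-1 = t+1 from by omega, pow_zero]
      ring]
    simp only [hopProb]
    simp only [show i+t+1-i = t+1 from by omega]
    rw [qPoch_succ μ q t, qPoch_succ ν q (t+1), qPoch_succ ν q t, qPoch_succ q q t]
    rw [div_mul_div_comm]
    rw [div_eq_div_iff (by apply_rules [mul_ne_zero, fac_ne, hqq, hν]) hDEN]
    ring
  have e3 : hopProb q μ ν (i+1) (i+t+1)
      = μ^i * qPoch (ν/μ) q i * (μ - ν*q^i) * qPoch μ q t * qPoch q q (i+t+1) *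
          (1-q*q^t) * (1-ν*q^(i+t+1)) * (1-ν*q^t) * (1-ν*q^(t+1)) /
        (qPoch ν q (i+t+1) * (1-ν*q^(i+t+1)) * qPoch q q i * (1-q*q^i) *
          qPoch q q t * (1-q*q^t) * (1-ν*q^t) * (1-ν*q^(t+1))) := by
    simp only [hopProb]
    simp only [show i+t+1-(i+1) = t from by omega]
    rw [hψ, qPoch_succ q q i]
    rw [div_eq_div_iff (by apply_rules [mul_ne_zero, fac_ne, hqq, hν]) hDEN]
    ring
  have e3b : hopProb q μ ν (i+1) (i+t+1) * aCoef q ν (t+1) (t+1)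
      = μ^i * qPoch (ν/μ) q i * (μ - ν*q^i) * qPoch μ q t * qPoch q q (i+t+1) *
          (1-q*q^t) * (1-ν*q^(i+t+1)) * (1-q^t) * (1-ν*q^(t+1)) /
        (qPoch ν q (i+t+1) * (1-ν*q^(i+t+1)) * qPoch q q i * (1-q*q^i) *
          qPoch q q t * (1-q*q^t) * (1-ν*q^t) * (1-ν*q^(t+1))) := by
    rw [show aCoef q ν (t+1) (t+1) = (1 - q^t)/(1 - ν*q^t) from by simp [aCoef], e3]
    rw [div_mul_div_comm]
    rw [div_eq_div_iff (by apply_rules [mul_ne_zero, fac_ne, hqq, hν]) hDEN]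
    ring
  rw [e1, e2, e3b, e3]
  simp only [div_mul_eq_mul_div, mul_div_assoc']
  rw [← add_div, ← add_div]
  rw [div_eq_div_iff hDEN hDEN]
  rw [hrel]
  ring

set_option maxHeartbeats 1000000 in
/-- The skew Pascal-type recursion for the weights `φ(m|n)` with `μ = p + ν(1-p)`:
`φ(l|n) = p ∑_{m=0}^{l} φ(m|n-1) a_{n-l}^{n-m} + (1-p) φ(l|n-1)` for `l < n`, and
`φ(n|n) = p ∑_{m=0}^{n-1} φ(m|n-1) a_0^{n-m}`. -/
theorem hopProb_recursion (q ν p : ℂ) (hq0 : q ≠ 0) (hνq : ν ≠ q)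
    (hμ : p + ν * (1 - p) ≠ 0)
    (hqq : ∀ k : ℕ, qPoch q q k ≠ 0) (hν : ∀ k : ℕ, qPoch ν q k ≠ 0)
    (n : ℕ) (hn : 1 ≤ n) :
    (∀ l < n, hopProb q (p + ν * (1 - p)) ν l n
      = p * ∑ m ∈ Finset.range (l + 1),
          hopProb q (p + ν * (1 - p)) ν m (n - 1) * aCoef q ν (n - l) (n - m)
        + (1 - p) * hopProb q (p + ν * (1 - p)) ν l (n - 1))
    ∧ hopProb q (p + ν * (1 - p)) ν n n
      = p * ∑ m ∈ Finset.range n,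
          hopProb q (p + ν * (1 - p)) ν m (n - 1) * aCoef q ν 0 (n - m) := by
  by_cases hp : p = 0
  · subst hp
    simp only [sub_zero, mul_one, zero_add, zero_mul, one_mul] at hμ ⊢
    have hν0 : ν ≠ 0 := hμ
    have hz : ∀ m N : ℕ, m ≠ 0 → hopProb q ν ν m N = 0 := by
      intro m N hm
      have h0 : qPoch (ν/ν) q m = 0 := by
        rw [div_self hν0, qPoch]
        apply Finset.prod_eq_zero (Finset.mem_range.mpr (Nat.pos_of_ne_zero hm))
        simp
      rw [hopProb, h0]
      simp
    have ho : ∀ N, hopProb q ν ν 0 N = 1 := by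
      intro N
      rw [hopProb]
      simp only [pow_zero, one_mul, qPoch_zero, Nat.sub_zero, mul_one]
      exact div_self (mul_ne_zero (hν N) (hqq N))
    constructor
    · intro l hl
      rcases Nat.eq_zero_or_pos l with rfl | hlp
      · rw [ho, ho]
      · rw [hz l n (by omega), hz l (n-1) (by omega)]
    · rw [hz n n (by omega)]
  · -- p ≠ 0
    set μ := p + ν * (1 - p) with hμdef
    have h1ν : (1:ℂ) - ν ≠ 0 := by
      have := fac_ne hν 0
      simpa using this
    have hΔ : ∀ t : ℕ, (μ - ν) * (ν * q ^ (t+1) - q) ≠ 0 := by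
      intro t
      apply mul_ne_zero
      · rw [hμdef, show p + ν * (1-p) - ν = p * (1 - ν) from by ring]
        exact mul_ne_zero hp h1ν
      · rw [show ν * q^(t+1) - q = -(q * (1 - ν * q^t)) from by ring]
        exact neg_ne_zero.mpr (mul_ne_zero hq0 (fac_ne hν t))
    constructor
    · intro l hl
      rcases l with _ | i
      · -- l = 0
        obtain ⟨t, rfl⟩ : ∃ t, n = t + 1 := ⟨n - 1, by omega⟩
        simp only [Nat.zero_add, Finset.sum_range_one, Nat.sub_zero, Nat.add_sub_cancel]
        rw [show aCoef q ν (t+1) (t+1) = (1 - q^t)/(1 - ν*q^t) from by simp [aCoef]]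
        simp only [hopProb, Nat.sub_zero, pow_zero, one_mul, qPoch_zero]
        rw [qPoch_succ μ q t, qPoch_succ ν q t]
        have n1 := hqq t
        have n2 := hqq (t+1)
        have n3 := hν t
        have n4 := fac_ne hν t
        rw [hμdef]
        field_simp
        ring
      · -- l = i+1
        obtain ⟨t, rfl⟩ : ∃ t, n = i + t + 2 := ⟨n - i - 2, by omega⟩
        have key := L1 q ν μ hμ hqq hν (i+t+2) i (t+1) (by omega)
        simp only [show i+t+2-1 = i+t+1 from by omega, show i+t+2-i = t+2 from by omega,
          show i+t+2-(i+1) = t+1 from by omega] at key ⊢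
        rw [Finset.sum_range_succ]
        simp only [show i+t+2-(i+1) = t+1 from by omega]
        have hD := hΔ (i+t+1)
        rw [show (i+t+1)+1 = i+t+2 from by omega] at hD
        refine mul_right_cancel₀ hD ?_
        have final := finalLemma q ν μ hμ hqq hν i t p hμdef
        linear_combination final - p * key
    · -- top case
      obtain ⟨t, rfl⟩ : ∃ t, n = t + 1 := ⟨n - 1, by omega⟩
      have key := L1 q ν μ hμ hqq hν (t+1) t 0 (by omega)
      simp only [Nat.add_sub_cancel, show t+1-t = 1 from by omega] at key
      rw [ha01 q ν hq0 hνq h1ν, mul_one] at key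
      simp only [Nat.add_sub_cancel]
      refine mul_right_cancel₀ (hΔ t) ?_
      have final2 : hopProb q μ ν (t+1) (t+1) * ((μ-ν)*(ν*q^(t+1) - q))
          = p * (hopProb q μ ν t t * (ν*μ*q^1 - ν^2*q^(t+1) - μ*q + ν*q^(t+1))) := by
        simp only [hopProb, Nat.sub_self, qPoch_zero]
        rw [show μ^(t+1) * qPoch (ν/μ) q (t+1) = μ^t * qPoch (ν/μ) q t * (μ - ν*q^t) from by
          rw [qPoch_succ, pow_succ]; field_simp]
        rw [qPoch_succ ν q t]
        have n1 := hqq t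
        have n2 := hqq (t+1)
        have n3 := hν t
        have n4 := fac_ne hν t
        rw [hμdef]
        field_simp
        ring
      linear_combination final2 - p * key
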